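/- arXiv:1310.1253 — 4 statements merged into one kernel-verified Lean document; each statement's English description precedes it below -/
import Mathlib

section
/- Let n be a positive integer, m an integer with gcd(m,n) = 1, and m* an integer with m·m* ≡ 1 (mod n). Then S(m,n) - (m + m*)/n is an integer, where S(m,n) = 12·s(m,n) is twelve times the classical Dedekind sum. -/
noncomputable def saw (x : ℚ) : ℚ := if x.den = 1 then 0 else x - ⌊x⌋ - 1/2

noncomputable def dedekindSum (m n : ℤ) : ℚ :=
  ∑ k ∈ Finset.Icc (1:ℤ) n, saw ((k : ℚ) / (n : ℚ)) * saw ((m : ℚ) * (k : ℚ) / (n : ℚ))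

noncomputable def S (m n : ℤ) : ℚ := 12 * dedekindSum m n

lemma icoInsertTop (a b : ℤ) (h : a ≤ b) :
    Finset.Ico a (b+1) = insert b (Finset.Ico a b) := by
  ext x; simp only [Finset.mem_Ico, Finset.mem_insert]; omega

lemma icoInsertBot (n : ℤ) (h : 0 < n) :
    Finset.Ico (0:ℤ) n = insert 0 (Finset.Ico (1:ℤ) n) := by
  ext x; simp only [Finset.mem_Ico, Finset.mem_insert]; omega

lemma gauss1N (N : ℕ) : 2 * ∑ k ∈ Finset.Ico (0:ℤ) (N:ℤ), k = (N:ℤ) * ((N:ℤ)-1) := by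
  induction N with
  | zero => simp
  | succ N ih =>
      have hcast : ((N+1:ℕ):ℤ) = (N:ℤ)+1 := by push_cast; ring
      rw [hcast, icoInsertTop 0 (N:ℤ) (Int.natCast_nonneg N), Finset.sum_insert (by simp)]
      push_cast
      linear_combination ih

lemma gauss2N (N : ℕ) :
    6 * ∑ k ∈ Finset.Ico (0:ℤ) (N:ℤ), k^2 = (N:ℤ) * ((N:ℤ)-1) * (2*(N:ℤ)-1) := by
  induction N with
  | zero => simp
  | succ N ih =>
      have hcast : ((N+1:ℕ):ℤ) = (N:ℤ)+1 := by push_cast; ring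
      rw [hcast, icoInsertTop 0 (N:ℤ) (Int.natCast_nonneg N), Finset.sum_insert (by simp)]
      push_cast
      linear_combination ih

lemma gauss1 (n : ℤ) (hn : 0 ≤ n) : 2 * ∑ k ∈ Finset.Ico (0:ℤ) n, k = n * (n-1) := by
  have hh : n = ((n.toNat : ℕ) : ℤ) := (Int.toNat_of_nonneg hn).symm
  rw [hh]; exact gauss1N _

lemma gauss2 (n : ℤ) (hn : 0 ≤ n) :
    6 * ∑ k ∈ Finset.Ico (0:ℤ) n, k^2 = n * (n-1) * (2*n-1) := by
  have hh : n = ((n.toNat : ℕ) : ℤ) := (Int.toNat_of_nonneg hn).symm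
  rw [hh]; exact gauss2N _

lemma keyinv (n : ℤ) (hn : 0 < n) (a b : ℤ) (hab : n ∣ a * b - 1) (k : ℤ)
    (hk0 : 0 ≤ k) (hkn : k < n) : b * (a * k % n) % n = k := by
  have h1 : b * (a * k % n) % n = b * (a * k) % n := by
    rw [Int.mul_emod, Int.emod_emod_of_dvd _ dvd_rfl, ← Int.mul_emod]
  have h2 : n ∣ b * (a * k) - k := by
    obtain ⟨c, hc⟩ := hab
    exact ⟨k * c, by linear_combination k * hc⟩
  have h3 : b * (a * k) % n = k % n := Int.ModEq.symm (Int.modEq_iff_dvd.mpr h2)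
  rw [h1, h3, Int.emod_eq_of_lt hk0 hkn]

lemma sumBijEmod (n m mstar : ℤ) (hn : 0 < n) (hmm : n ∣ m * mstar - 1) (f : ℤ → ℤ) :
    ∑ k ∈ Finset.Ico (0:ℤ) n, f (m * k % n) = ∑ k ∈ Finset.Ico (0:ℤ) n, f k := by
  have hmm' : n ∣ mstar * m - 1 := by obtain ⟨c, hc⟩ := hmm; exact ⟨c, by linear_combination hc⟩
  refine Finset.sum_bij' (fun k _ => m * k % n) (fun k _ => mstar * k % n) ?_ ?_ ?_ ?_ ?_
  · intro a ha
    simp only [Finset.mem_Ico] at *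
    exact ⟨Int.emod_nonneg _ hn.ne', Int.emod_lt_of_pos _ hn⟩
  · intro a ha
    simp only [Finset.mem_Ico] at *
    exact ⟨Int.emod_nonneg _ hn.ne', Int.emod_lt_of_pos _ hn⟩
  · intro a ha
    simp only [Finset.mem_Ico] at ha
    exact keyinv n hn m mstar hmm a ha.1 ha.2
  · intro a ha
    simp only [Finset.mem_Ico] at ha
    exact keyinv n hn mstar m hmm' a ha.1 ha.2
  · intro a ha; rfl

lemma twoDvd (m : ℤ) (h : ¬ (2:ℤ) ∣ m) : (2:ℤ) ∣ m^2 - 1 := by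
  obtain ⟨a, ha⟩ : ∃ a, m = 2*a+1 := ⟨m/2, by omega⟩
  exact ⟨2*a^2+2*a, by subst ha; ring⟩

lemma threeDvd (m : ℤ) (h : ¬ (3:ℤ) ∣ m) : (3:ℤ) ∣ m^2 - 1 := by
  have h3 : m % 3 = 1 ∨ m % 3 = 2 := by omega
  rcases h3 with h3 | h3
  · obtain ⟨a, ha⟩ : ∃ a, m = 3*a+1 := ⟨m/3, by omega⟩
    exact ⟨3*a^2+2*a, by subst ha; ring⟩
  · obtain ⟨a, ha⟩ : ∃ a, m = 3*a+2 := ⟨m/3, by omega⟩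
    exact ⟨3*a^2+4*a+1, by subst ha; ring⟩

lemma notDvdOfGcd (m n : ℤ) (h : Int.gcd m n = 1) (d : ℤ) (hd1 : 1 < d) (hdn : d ∣ n) :
    ¬ d ∣ m := by
  intro hdm
  have h1 := Int.dvd_coe_gcd hdm hdn
  rw [h] at h1
  have := Int.le_of_dvd (by norm_num) h1
  omega

lemma sixDvd (m n : ℤ) (h : Int.gcd m n = 1) :
    (6:ℤ) ∣ (m^2 - 1) * ((n-1)*(2*n-1)) := by
  have h2 : (2:ℤ) ∣ (m^2 - 1) * ((n-1)*(2*n-1)) := by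
    by_cases hn2 : (2:ℤ) ∣ n
    · exact Dvd.dvd.mul_right (twoDvd m (notDvdOfGcd m n h 2 one_lt_two hn2)) _
    · exact Dvd.dvd.mul_left (Dvd.dvd.mul_right (by omega : (2:ℤ) ∣ n - 1) _) _
  have h3 : (3:ℤ) ∣ (m^2 - 1) * ((n-1)*(2*n-1)) := by
    by_cases hn3 : (3:ℤ) ∣ n
    · exact Dvd.dvd.mul_right (threeDvd m (notDvdOfGcd m n h 3 (by norm_num) hn3)) _
    · have hc : n % 3 = 1 ∨ n % 3 = 2 := by omega
      rcases hc with h1 | h1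
      · exact Dvd.dvd.mul_left (Dvd.dvd.mul_right (by omega : (3:ℤ) ∣ n - 1) _) _
      · exact Dvd.dvd.mul_left (Dvd.dvd.mul_left (by omega : (3:ℤ) ∣ 2*n - 1) _) _
  obtain ⟨a, ha⟩ := h2
  obtain ⟨b, hb⟩ := h3
  exact ⟨a - b, by omega⟩

lemma sawIntDiv (a n : ℤ) (hn : 0 < n) (hnd : ¬ n ∣ a) :
    saw ((a:ℚ)/(n:ℚ)) = ((a % n : ℤ) : ℚ) / (n:ℚ) - 1/2 := by
  have hn0 : (n:ℚ) ≠ 0 := Int.cast_ne_zero.mpr hn.ne'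
  have hden : ((a:ℚ)/(n:ℚ)).den ≠ 1 := by
    intro hd
    have h1 : ((((a:ℚ)/(n:ℚ)).num : ℤ) : ℚ) = (a:ℚ)/(n:ℚ) := (Rat.den_eq_one_iff _).mp hd
    rw [eq_div_iff hn0] at h1
    have h2 : a = ((a:ℚ)/(n:ℚ)).num * n := by exact_mod_cast h1.symm
    exact hnd ⟨((a:ℚ)/(n:ℚ)).num, by linarith⟩
  rw [saw, if_neg hden]
  have hfl : ⌊(a:ℚ)/(n:ℚ)⌋ = a / n := by
    have hc : (n:ℚ) = ((n.toNat : ℕ) : ℚ) := by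
      rw [← Int.toNat_of_nonneg hn.le]; norm_cast
    rw [hc, Rat.floor_intCast_div_natCast, Int.toNat_of_nonneg hn.le]
  rw [hfl]
  have hdm := Int.mul_ediv_add_emod a n
  have hcast : ((a % n : ℤ) : ℚ) = (a:ℚ) - (n:ℚ) * ((a / n : ℤ) : ℚ) := by
    push_cast
    have : ((a % n : ℤ) : ℚ) = ((a - n * (a/n) : ℤ) : ℚ) := by
      congr 1; omega
    push_cast at this
    linarith [this]
  rw [hcast]
  field_simp

theorem stmt3 (n : ℤ) (hn : 0 < n) (m mstar : ℤ) (h : Int.gcd m n = 1)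
    (hinv : m * mstar ≡ 1 [ZMOD n]) :
    ∃ z : ℤ, S m n - ((m : ℚ) + (mstar : ℚ)) / (n : ℚ) = z := by
  have hnQ : (n:ℚ) ≠ 0 := Int.cast_ne_zero.mpr hn.ne'
  have hcop : n ∣ m * mstar - 1 := by
    obtain ⟨c, hc⟩ := Int.ModEq.dvd hinv
    exact ⟨-c, by linear_combination -hc⟩
  obtain ⟨c, hc⟩ := hcop
  have hcop' : n ∣ m * mstar - 1 := ⟨c, hc⟩
  have hrq' : ∀ k : ℤ, m * k % n = m * k - n * (m * k / n) := by
    intro k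
    have := Int.mul_ediv_add_emod (m*k) n
    linarith
  set K0 := Finset.Ico (0:ℤ) n with hK0
  set K1 := Finset.Ico (1:ℤ) n with hK1
  set σ1 := ∑ k ∈ K0, k with hσ1def
  set σ2 := ∑ k ∈ K0, k^2 with hσ2def
  set A := ∑ k ∈ K0, k * (m*k % n) with hAdef
  set U := ∑ k ∈ K0, k * (m*k / n) with hUdef
  set V := ∑ k ∈ K0, (m*k % n) * (m*k / n) with hVdef
  set B := ∑ k ∈ K0, (2*k - n) * (2*(m*k % n) - n) with hBdef
  have F1 : ∑ k ∈ K0, (m*k % n) = σ1 := by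
    rw [hσ1def]; exact sumBijEmod n m mstar hn hcop' (fun x => x)
  have F2 : ∑ k ∈ K0, (m*k % n)^2 = σ2 := by
    rw [hσ2def]; exact sumBijEmod n m mstar hn hcop' (fun x => x^2)
  have F3 : A = m * σ2 - n * U := by
    rw [hAdef, hσ2def, hUdef, Finset.mul_sum, Finset.mul_sum, ← Finset.sum_sub_distrib]
    refine Finset.sum_congr rfl fun k _ => ?_
    rw [hrq' k]; ring
  have F4 : n * V = m * A - σ2 := by
    have F4' : n * V = m * A - ∑ k ∈ K0, (m*k % n)^2 := by
      rw [hVdef, hAdef, Finset.mul_sum, Finset.mul_sum, ← Finset.sum_sub_distrib]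
      refine Finset.sum_congr rfl fun k _ => ?_
      rw [hrq' k]; ring
    rw [F4', F2]
  have F5 : U - mstar * V = n * ∑ k ∈ K0, ((m*k/n) * (mstar*(m*k/n) - k*c)) := by
    rw [hUdef, hVdef, Finset.mul_sum, Finset.mul_sum, ← Finset.sum_sub_distrib]
    refine Finset.sum_congr rfl fun k _ => ?_
    rw [hrq' k]
    linear_combination (-(k*(m*k/n))) * hc
  obtain ⟨d, hd⟩ : n ∣ U - mstar * V := ⟨_, F5⟩
  have hgauss1 : 2 * σ1 = n * (n-1) := by rw [hσ1def]; exact gauss1 n hn.le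
  have hgauss2 : 6 * σ2 = n * ((n-1) * (2*n-1)) := by
    rw [hσ2def]; linear_combination gauss2 n hn.le
  obtain ⟨W, hW⟩ := sixDvd m n h
  have hVW : V = W - m * U := by
    apply mul_left_cancel₀ (show (6*n : ℤ) ≠ 0 by positivity)
    linear_combination 6*F4 + 6*m*F3 + (m^2-1)*hgauss2 + n*hW
  have h12U : 12*U - mstar*((m^2-1)*((n-1)*(2*n-1))) = n * (6*d - 6*c*U) := by
    linear_combination 6*hd + 6*mstar*hVW - 6*U*hc - mstar*hW
  obtain ⟨e, he⟩ : n ∣ 12*U - mstar*((m^2-1)*((n-1)*(2*n-1))) := ⟨_, h12U⟩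
  set z0 : ℤ := -e + (2*m - m^2*mstar + mstar)*(2*n-3) - m*c - 3*(n-1) with hz0def
  have hz0 : 12*A - 3*n^2*(n-1) - n*(m+mstar) = n^2 * z0 := by
    rw [hz0def]
    linear_combination 12*F3 + 2*m*hgauss2 - n*he - n*m*hc
  have hcard : ((K0.card : ℕ) : ℤ) = n := by
    have h1 : ((Finset.Ico (0:ℤ) n).card : ℤ) = n - 0 :=
      Int.card_Ico_of_le (a := 0) (b := n) (by omega)
    rw [hK0]; omega
  have RB : B = 4*A - 2*n*σ1 - 2*n*σ1 + n^2*n := by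
    rw [hBdef]
    have e1 : ∑ k ∈ K0, ((2*k - n) * (2*(m*k % n) - n))
        = ∑ k ∈ K0, (4*(k*(m*k % n)) - 2*n*k - 2*n*(m*k % n) + n^2) :=
      Finset.sum_congr rfl fun k _ => by ring
    rw [e1, Finset.sum_add_distrib, Finset.sum_sub_distrib, Finset.sum_sub_distrib,
        ← Finset.mul_sum, ← Finset.mul_sum, ← Finset.mul_sum, Finset.sum_const,
        nsmul_eq_mul, F1]
    rw [← hσ1def, ← hAdef, hcard]
    ring
  have I1 : 3*B - 3*n^2 - n*(m+mstar) = n^2 * z0 := by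
    linear_combination 3*RB + hz0 - 6*n*hgauss1
  -- rational side
  have hIcc : Finset.Icc (1:ℤ) n = insert n K1 := by
    rw [hK1]; ext x; simp only [Finset.mem_Icc, Finset.mem_Ico, Finset.mem_insert]; omega
  have hsaw1 : saw 1 = 0 := by rw [saw]; norm_num
  have R0 : dedekindSum m n
      = ∑ k ∈ K1, ((k:ℚ)/(n:ℚ) - 1/2) * (((m*k % n : ℤ) : ℚ)/(n:ℚ) - 1/2) := by
    rw [dedekindSum, hIcc, Finset.sum_insert (by simp [hK1]), div_self hnQ, hsaw1,
        zero_mul, zero_add]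
    refine Finset.sum_congr rfl fun k hk => ?_
    rw [hK1] at hk
    simp only [Finset.mem_Ico] at hk
    have hndk : ¬ n ∣ k := fun hdvd => by
      have := Int.le_of_dvd (by omega) hdvd; omega
    have hndmk : ¬ n ∣ m*k := by
      intro hdvd
      have hcp : IsCoprime (n:ℤ) m := (Int.isCoprime_iff_gcd_eq_one.mpr h).symm
      exact hndk (hcp.dvd_of_dvd_mul_left hdvd)
    have e1 := sawIntDiv k n hn hndk
    have e2 := sawIntDiv (m*k) n hn hndmk
    rw [Int.emod_eq_of_lt (by omega) hk.2] at e1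
    have hmk : (m:ℚ)*(k:ℚ) = ((m*k : ℤ) : ℚ) := by push_cast; ring
    rw [e1, hmk, e2]
  have hK0split : K0 = insert 0 K1 := by rw [hK0, hK1]; exact icoInsertBot n hn
  have e0 : ((B:ℤ):ℚ) = (n:ℚ)^2
      + ∑ k ∈ K1, (2*(k:ℚ) - (n:ℚ)) * (2*((m*k % n : ℤ):ℚ) - (n:ℚ)) := by
    rw [hBdef, hK0split, Finset.sum_insert (by simp [hK1])]
    push_cast
    have hz' : m * 0 % n = 0 := by simp
    rw [hz']
    push_cast
    ring
  have R1 : (4*(n:ℚ)^2) * dedekindSum m n = ((B : ℤ):ℚ) - (n:ℚ)^2 := by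
    rw [R0, Finset.mul_sum, e0, add_sub_cancel_left]
    refine Finset.sum_congr rfl fun k _ => ?_
    field_simp
    ring
  refine ⟨z0, ?_⟩
  apply mul_left_cancel₀ (show (4*(n:ℚ)^2) ≠ 0 by positivity)
  have hdivm : (4*(n:ℚ)^2) * (((m:ℚ)+(mstar:ℚ))/(n:ℚ)) = 4*(n:ℚ)*((m:ℚ)+(mstar:ℚ)) := by
    field_simp
  rw [S, mul_sub, hdivm]
  have I1Q : 3*((B:ℤ):ℚ) - 3*(n:ℚ)^2 - (n:ℚ)*((m:ℚ)+(mstar:ℚ)) = (n:ℚ)^2*((z0:ℤ):ℚ) := by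
    exact_mod_cast congrArg (fun x : ℤ => (x : ℚ)) I1
  linear_combination 12*R1 + 4*I1Q
end

section
/- Let n be an even positive integer and q an odd integer with q ≡ 1 (mod 4) and gcd(q,n) = 1. Let p be a prime with p ≡ 1 (mod 4) and q·p ≡ 1 (mod n). Suppose m is an integer with m ≡ 1 (mod 2n) and m² ≡ -1 (mod p), and m* is an integer with m·m* ≡ 1 (mod 2·n·p). Then (m + m*)/(2·n·p) - q/n ∈ ℤ. -/
theorem stmt6 (n q p m mstar : ℤ) (hn : 0 < n) (heven : Even n) (hqodd : Odd q)
    (hq4 : q ≡ 1 [ZMOD 4]) (hgcd : Int.gcd q n = 1) (hp : Prime p) (hp4 : p ≡ 1 [ZMOD 4])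
    (hqp : q * p ≡ 1 [ZMOD n]) (hm : m ≡ 1 [ZMOD (2 * n)]) (hm2 : m ^ 2 ≡ -1 [ZMOD p])
    (hinv : m * mstar ≡ 1 [ZMOD (2 * n * p)]) :
    ∃ z : ℤ, ((m : ℚ) + (mstar : ℚ)) / (2 * (n : ℚ) * (p : ℚ)) - (q : ℚ) / (n : ℚ) = z := by
  -- coprimality facts
  have hpn : IsCoprime p n := by
    obtain ⟨k, hk⟩ := Int.ModEq.dvd hqp
    exact ⟨q, k, by linarith⟩
  have hp2 : p ≡ 1 [ZMOD 2] := hp4.of_dvd (by norm_num)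
  have h2p : IsCoprime (2 : ℤ) p := by
    obtain ⟨t, ht⟩ := Int.ModEq.dvd hp2
    exact ⟨t, 1, by linarith⟩
  have hcop : IsCoprime (2 * n) p := h2p.mul_left hpn.symm
  -- congruence mod 2n
  have h1 : m * mstar ≡ 1 [ZMOD 2 * n] := hinv.of_dvd ⟨p, rfl⟩
  have hms : mstar ≡ 1 [ZMOD 2 * n] := by
    calc mstar = 1 * mstar := by ring
      _ ≡ m * mstar [ZMOD 2 * n] := hm.symm.mul_right mstar
      _ ≡ 1 [ZMOD 2 * n] := h1
  have h2n : m + mstar ≡ 2 * p * q [ZMOD 2 * n] := by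
    have h2 : (2 * p * q : ℤ) ≡ 2 [ZMOD 2 * n] := by
      have h := hqp.mul_left' (c := 2)
      calc (2 * p * q : ℤ) = 2 * (q * p) := by ring
        _ ≡ 2 * 1 [ZMOD 2 * n] := h
        _ = 2 := by ring
    calc m + mstar ≡ 1 + 1 [ZMOD 2 * n] := hm.add hms
      _ = 2 := by ring
      _ ≡ 2 * p * q [ZMOD 2 * n] := h2.symm
  -- congruence mod p
  have h1p : m * mstar ≡ 1 [ZMOD p] := hinv.of_dvd ⟨2 * n, by ring⟩
  have hpmm : ¬ p ∣ m := by
    intro h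
    have hd : p ∣ 1 - m * mstar := Int.ModEq.dvd h1p
    have : p ∣ (1 : ℤ) := by
      have h2 : p ∣ m * mstar := h.mul_right mstar
      simpa using dvd_add hd h2
    exact hp.not_unit (isUnit_of_dvd_one this)
  have hdp : p ∣ m * (m + mstar) := by
    have h0 : m * (m + mstar) ≡ 0 [ZMOD p] := by
      calc m * (m + mstar) = m ^ 2 + m * mstar := by ring
        _ ≡ -1 + 1 [ZMOD p] := hm2.add h1p
        _ = 0 := by ring
    exact Int.modEq_zero_iff_dvd.mp h0
  have hsum : p ∣ m + mstar := (hp.dvd_mul.mp hdp).resolve_left hpmm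
  have hpcong : m + mstar ≡ 2 * p * q [ZMOD p] := by
    have h1 : m + mstar ≡ 0 [ZMOD p] := Int.modEq_zero_iff_dvd.mpr hsum
    have h2 : (2 * p * q : ℤ) ≡ 0 [ZMOD p] := Int.modEq_zero_iff_dvd.mpr ⟨2 * q, by ring⟩
    exact h1.trans h2.symm
  -- combine
  obtain ⟨k, hk⟩ : (2 * n * p) ∣ (m + mstar) - 2 * p * q :=
    hcop.mul_dvd h2n.symm.dvd hpcong.symm.dvd
  refine ⟨k, ?_⟩
  have hn0 : (n : ℚ) ≠ 0 := Int.cast_ne_zero.mpr hn.ne'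
  have hp0 : (p : ℚ) ≠ 0 := Int.cast_ne_zero.mpr hp.ne_zero
  have hkq : (m : ℚ) + mstar - 2 * p * q = 2 * n * p * k := by exact_mod_cast congrArg (Int.cast : ℤ → ℚ) hk
  field_simp
  linear_combination hkq
end

section
/- Let n and q be integers with n ≥ 1, 0 ≤ q ≤ n-1 and gcd(q,n) = 1. Then there exist integers m and n' with n' ≥ 1, 0 ≤ m ≤ n'-1, gcd(m,n') = 1, such that S(m,n') - q/n is an integer, where S(m,n') = 12·s(m,n') is twelve times the classical Dedekind sum. -/
open Finset

lemma saw_div (a b : ℤ) (hb : 0 < b) :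
    saw ((a:ℚ)/b) = if b ∣ a then 0 else ((a % b : ℤ) : ℚ)/b - 1/2 := by
  have hb' : (b:ℚ) ≠ 0 := by exact_mod_cast hb.ne'
  by_cases h : b ∣ a
  · rw [if_pos h]
    obtain ⟨c, rfl⟩ := h
    have hx : ((b*c : ℤ):ℚ)/b = (c:ℚ) := by push_cast; field_simp
    rw [hx]
    simp [saw, Rat.den_intCast]
  · rw [if_neg h]
    have hbn : ((b.toNat : ℕ) : ℚ) = (b:ℚ) := by exact_mod_cast Int.toNat_of_nonneg hb.le
    have hbn2 : (b.toNat : ℤ) = b := Int.toNat_of_nonneg hb.le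
    have hfl : ⌊(a:ℚ)/b⌋ = a / b := by
      calc ⌊(a:ℚ)/b⌋ = ⌊(a:ℚ)/(b.toNat:ℕ)⌋ := by rw [hbn]
        _ = a / (b.toNat:ℤ) := Rat.floor_intCast_div_natCast a b.toNat
        _ = a / b := by rw [hbn2]
    have hden : ((a:ℚ)/b).den ≠ 1 := by
      intro hd
      have hnum := (Rat.den_eq_one_iff _).mp hd
      apply h
      refine ⟨((a:ℚ)/b).num, ?_⟩
      have : ((((a:ℚ)/b).num : ℚ)) * b = a := by rw [hnum]; field_simp
      exact_mod_cast (by linarith [this] : (a:ℚ) = b * ((a:ℚ)/b).num)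
    simp only [saw, hden, if_false, hfl]
    have hm : a % b = a - b * (a/b) := Int.emod_def a b
    push_cast [hm]
    field_simp


lemma Ioc_int_succ (a b : ℤ) (h : a ≤ b) :
    Ioc a (b+1) = insert (b+1) (Ioc a b) := by
  ext x; simp only [mem_Ioc, mem_insert]; omega

lemma notmem_Ioc_top (a b : ℤ) : b + 1 ∉ Ioc a b := by
  simp only [mem_Ioc]; omega

lemma gauss1_s7 (N : ℤ) (h : 0 ≤ N) : ∑ k ∈ Ioc (0:ℤ) N, (k:ℚ) = N*(N+1)/2 := by
  obtain ⟨n, rfl⟩ := Int.eq_ofNat_of_zero_le h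
  induction n with
  | zero => simp
  | succ n ih =>
    have h1 : ((n+1:ℕ):ℤ) = (n:ℤ)+1 := by push_cast; ring
    rw [h1, Ioc_int_succ 0 n (by positivity), sum_insert (notmem_Ioc_top _ _), ih (by positivity)]
    push_cast; ring

lemma gauss2_s7 (N : ℤ) (h : 0 ≤ N) : ∑ k ∈ Ioc (0:ℤ) N, (k:ℚ)^2 = N*(N+1)*(2*N+1)/6 := by
  obtain ⟨n, rfl⟩ := Int.eq_ofNat_of_zero_le h
  induction n with
  | zero => simp
  | succ n ih =>
    have h1 : ((n+1:ℕ):ℤ) = (n:ℤ)+1 := by push_cast; ring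
    rw [h1, Ioc_int_succ 0 n (by positivity), sum_insert (notmem_Ioc_top _ _), ih (by positivity)]
    push_cast; ring

lemma Icc_one_eq_Ioc (N : ℤ) : Icc (1:ℤ) N = Ioc 0 N := by
  ext x; simp only [mem_Ioc, mem_Icc]; omega

lemma sum_Ioc_split {M : Type*} [AddCommMonoid M] (f : ℤ → M) {a b c : ℤ}
    (h1 : a ≤ b) (h2 : b ≤ c) :
    ∑ i ∈ Ioc a c, f i = (∑ i ∈ Ioc a b, f i) + ∑ i ∈ Ioc b c, f i := by
  rw [← Finset.sum_union]
  · rw [Finset.Ioc_union_Ioc_eq_Ioc h1 h2]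
  · rw [Finset.disjoint_left]
    intro x hx hx'
    simp only [mem_Ioc] at hx hx'
    omega


lemma emod_inv_cancel {u m n k : ℤ} (hn : 0 < n) (h : n ∣ u*m - 1)
    (hk0 : 0 ≤ k) (hk1 : k < n) : (u * ((m*k) % n)) % n = k := by
  have e1 : (u * ((m*k) % n)) % n = (u * (m*k)) % n := by
    conv_lhs => rw [Int.mul_emod]
    conv_rhs => rw [Int.mul_emod]
    rw [Int.emod_emod_of_dvd _ dvd_rfl]
  have e2 : (u * (m*k)) % n = k % n := by
    rw [Int.emod_eq_emod_iff_emod_sub_eq_zero]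
    apply Int.emod_eq_zero_of_dvd
    obtain ⟨c, hc⟩ := h
    exact ⟨c * k, by linear_combination k * hc⟩
  rw [e1, e2, Int.emod_eq_of_lt hk0 hk1]

lemma sum_mul_emod (m n : ℤ) (hn : 1 ≤ n) (cop : IsCoprime m n) (g : ℤ → ℚ) :
    ∑ k ∈ Ioc (0:ℤ) (n-1), g ((m*k) % n) = ∑ k ∈ Ioc (0:ℤ) (n-1), g k := by
  obtain ⟨u, v, huv⟩ := cop
  have hn0 : (0:ℤ) < n := hn
  have hdvd1 : n ∣ u*m - 1 := ⟨-v, by linarith⟩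
  have hdvd2 : n ∣ m*u - 1 := ⟨-v, by linarith [mul_comm u m]⟩
  have hmem : ∀ a ∈ Ioc (0:ℤ) (n-1), ∀ w : ℤ, (n ∣ w * a → False) → (w * a) % n ∈ Ioc (0:ℤ) (n-1) := by
    intro a ha w hw
    simp only [mem_Ioc] at *
    have h0 : 0 ≤ (w*a) % n := Int.emod_nonneg _ hn0.ne'
    have h1 : (w*a) % n < n := Int.emod_lt_of_pos _ hn0
    have : (w*a) % n ≠ 0 := by
      intro h0'
      exact hw (Int.dvd_of_emod_eq_zero h0')
    omega
  refine Finset.sum_nbij' (fun k => (m*k) % n) (fun k => (u*k) % n) ?_ ?_ ?_ ?_ ?_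
  · intro a ha
    refine hmem a ha m ?_
    intro hdvd
    have hco : IsCoprime (n:ℤ) m := (isCoprime_comm.mp ⟨u,v,huv⟩)
    have : n ∣ a := hco.dvd_of_dvd_mul_left hdvd
    simp only [mem_Ioc] at ha
    have := Int.le_of_dvd (by omega) this
    omega
  · intro a ha
    refine hmem a ha u ?_
    intro hdvd
    have hcu : IsCoprime (n:ℤ) u :=
      (show IsCoprime u n from ⟨m, v, by linarith [mul_comm u m]⟩).symm
    have : n ∣ a := hcu.dvd_of_dvd_mul_left hdvd
    simp only [mem_Ioc] at ha
    have := Int.le_of_dvd (by omega) this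
    omega
  · intro a ha
    simp only [mem_Ioc] at ha
    exact emod_inv_cancel hn0 hdvd1 (by omega) (by omega)
  · intro a ha
    simp only [mem_Ioc] at ha
    exact emod_inv_cancel hn0 hdvd2 (by omega) (by omega)
  · intro a _; rfl

noncomputable def T (m n : ℤ) : ℤ := ∑ k ∈ Ioc (0:ℤ) (n-1), k * ((m*k) % n)

lemma dedekind_formula (m n : ℤ) (hn : 1 ≤ n) (cop : IsCoprime m n) :
    dedekindSum m n = (T m n : ℚ)/(n:ℚ)^2 - ((n:ℚ)-1)/4 := by
  have hn0 : (0:ℤ) < n := hn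
  have hnq : (n:ℚ) ≠ 0 := by exact_mod_cast hn0.ne'
  -- restrict the sum to Ioc 0 (n-1)
  have hsplit : Finset.Icc (1:ℤ) n = insert n (Ioc (0:ℤ) (n-1)) := by
    ext x; simp only [mem_Icc, mem_insert, mem_Ioc]; omega
  have hlast : saw ((n:ℚ)/(n:ℚ)) * saw ((m:ℚ)*(n:ℚ)/(n:ℚ)) = 0 := by
    have : (n:ℚ)/(n:ℚ) = 1 := div_self hnq
    rw [this]
    have : saw 1 = 0 := by simp [saw]
    rw [this, zero_mul]
  rw [dedekindSum, hsplit, Finset.sum_insert (by simp), hlast, zero_add]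
  -- rewrite each term
  have hterm : ∀ k ∈ Ioc (0:ℤ) (n-1),
      saw ((k:ℚ)/(n:ℚ)) * saw ((m:ℚ)*(k:ℚ)/(n:ℚ))
        = ((k:ℚ)*(((m*k) % n : ℤ):ℚ))/(n:ℚ)^2 - (k:ℚ)/(2*n) - (((m*k) % n : ℤ):ℚ)/(2*n) + 1/4 := by
    intro k hk
    simp only [mem_Ioc] at hk
    have hndk : ¬ n ∣ k := by
      intro hd
      have := Int.le_of_dvd (by omega) hd
      omega
    have hndmk : ¬ n ∣ m*k := by
      intro hd
      have hco : IsCoprime (n:ℤ) m := cop.symm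
      have := hco.dvd_of_dvd_mul_left hd
      exact hndk this
    have h1 : saw ((k:ℚ)/(n:ℚ)) = (k:ℚ)/(n:ℚ) - 1/2 := by
      rw [saw_div k n hn0, if_neg hndk, Int.emod_eq_of_lt (by omega) (by omega)]
    have h2 : saw ((m:ℚ)*(k:ℚ)/(n:ℚ)) = (((m*k) % n : ℤ):ℚ)/(n:ℚ) - 1/2 := by
      have : (m:ℚ)*(k:ℚ) = ((m*k : ℤ):ℚ) := by push_cast; ring
      rw [this, saw_div (m*k) n hn0, if_neg hndmk]
    rw [h1, h2]
    field_simp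
    ring
  rw [Finset.sum_congr rfl hterm]
  rw [Finset.sum_add_distrib, Finset.sum_sub_distrib, Finset.sum_sub_distrib]
  have hs1 : ∑ k ∈ Ioc (0:ℤ) (n-1), ((k:ℚ)*(((m*k) % n : ℤ):ℚ))/(n:ℚ)^2 = (T m n : ℚ)/(n:ℚ)^2 := by
    rw [← Finset.sum_div, T]
    push_cast
    rfl
  have hs2 : ∑ k ∈ Ioc (0:ℤ) (n-1), (k:ℚ)/(2*(n:ℚ)) = ((n:ℚ)-1)*(n:ℚ)/2/(2*(n:ℚ)) := by
    rw [← Finset.sum_div]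
    congr 1
    have := gauss1_s7 (n-1) (by omega)
    push_cast at this ⊢
    rw [this]; ring
  have hs3 : ∑ k ∈ Ioc (0:ℤ) (n-1), (((m*k) % n : ℤ):ℚ)/(2*(n:ℚ)) = ((n:ℚ)-1)*(n:ℚ)/2/(2*(n:ℚ)) := by
    rw [← Finset.sum_div]
    congr 1
    rw [sum_mul_emod m n hn cop (fun x => (x:ℚ))]
    have := gauss1_s7 (n-1) (by omega)
    push_cast at this ⊢
    rw [this]; ring
  have hs4 : ∑ _k ∈ Ioc (0:ℤ) (n-1), (1/4 : ℚ) = ((n:ℚ)-1)/4 := by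
    rw [Finset.sum_const, Int.card_Ioc]
    have : ((n - 1 - 0).toNat : ℚ) = (n:ℚ) - 1 := by
      have : ((n - 1 - 0).toNat : ℤ) = n - 1 := by
        rw [Int.toNat_of_nonneg (by omega : (0:ℤ) ≤ n - 1 - 0)]; ring
      exact_mod_cast this
    rw [nsmul_eq_mul, this]; ring
  rw [hs1, hs2, hs3, hs4]
  field_simp
  ring


lemma T_identity (m n : ℤ) (hm : 1 ≤ m) (hn : 1 ≤ n) (cop : IsCoprime m n) :
    12*(m:ℚ)^2 * (T m n : ℚ) + 12*(n:ℚ)^2 * (T n m : ℚ)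
      = 3*(m:ℚ)^2*(n:ℚ)^2*((m:ℚ)+(n:ℚ)-3) + (m:ℚ)*(n:ℚ)*((m:ℚ)^2+(n:ℚ)^2+1) := by
  have hm0 : (0:ℤ) < m := hm
  have hn0 : (0:ℤ) < n := hn
  have hmq : (m:ℚ) ≠ 0 := by exact_mod_cast hm0.ne'
  have hnq : (n:ℚ) ≠ 0 := by exact_mod_cast hn0.ne'
  set A : ℚ := ∑ k ∈ Ioc (0:ℤ) (n-1), (k:ℚ) * (((m*k)/n : ℤ):ℚ) with hA
  set F : ℚ := ∑ j ∈ Ioc (0:ℤ) (m-1), (((j*n)/m : ℤ):ℚ) with hF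
  set F2 : ℚ := ∑ j ∈ Ioc (0:ℤ) (m-1), (((j*n)/m : ℤ):ℚ)^2 with hF2
  -- eq1 : T m n = m * Qn - n * A
  have eq1 : (T m n : ℚ) = (m:ℚ) * (((n:ℚ)-1)*(n:ℚ)*(2*(n:ℚ)-1)/6) - (n:ℚ) * A := by
    have : ∀ k ∈ Ioc (0:ℤ) (n-1),
        ((k * ((m*k) % n) : ℤ) : ℚ) = (m:ℚ)*(k:ℚ)^2 - (n:ℚ)*((k:ℚ) * (((m*k)/n : ℤ):ℚ)) := by
      intro k _
      have := Int.emod_def (m*k) n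
      push_cast [this]
      ring
    have hcast : (T m n : ℚ) = ∑ k ∈ Ioc (0:ℤ) (n-1), ((k * ((m*k) % n) : ℤ):ℚ) := by
      rw [T]; push_cast; rfl
    rw [hcast, Finset.sum_congr rfl this,
      Finset.sum_sub_distrib, ← Finset.mul_sum, ← Finset.mul_sum,
      gauss2_s7 (n-1) (by omega)]
    push_cast
    ring
  -- eq2 : A in terms of F and F2
  have eq2 : A = ((m:ℚ)-1) * (((n:ℚ)-1)*(n:ℚ)/2) - (F2 + F)/2 := by
    have hstep : ∀ k ∈ Ioc (0:ℤ) (n-1),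
        (k:ℚ) * (((m*k)/n : ℤ):ℚ) = ∑ j ∈ Ioc (0:ℤ) (m-1), (if j*n ≤ m*k then (k:ℚ) else 0) := by
      intro k hk
      simp only [mem_Ioc] at hk
      have hfil : (Ioc (0:ℤ) (m-1)).filter (fun j => j*n ≤ m*k) = Ioc 0 ((m*k)/n) := by
        ext j
        simp only [mem_filter, mem_Ioc]
        constructor
        · rintro ⟨⟨h1,h2⟩,h3⟩
          exact ⟨h1, (Int.le_ediv_iff_mul_le hn0).mpr h3⟩
        · rintro ⟨h1,h2⟩
          have h3 : j*n ≤ m*k := (Int.le_ediv_iff_mul_le hn0).mp h2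
          have h4 : (m*k)/n < m := (Int.ediv_lt_iff_lt_mul hn0).mpr (by nlinarith)
          exact ⟨⟨h1, by omega⟩, h3⟩
      rw [← Finset.sum_filter, hfil, Finset.sum_const, Int.card_Ioc, nsmul_eq_mul]
      have hnonneg : (0:ℤ) ≤ (m*k)/n := Int.ediv_nonneg (by nlinarith) (by omega)
      have hnn : (((m*k)/n - 0).toNat : ℚ) = (((m*k)/n : ℤ) : ℚ) := by
        have h5 : (((m*k)/n - 0).toNat : ℤ) = (m*k)/n := by omega
        exact_mod_cast h5
      rw [hnn]; ring
    rw [hA, Finset.sum_congr rfl hstep, Finset.sum_comm]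
    have hinner : ∀ j ∈ Ioc (0:ℤ) (m-1),
        (∑ k ∈ Ioc (0:ℤ) (n-1), if j*n ≤ m*k then (k:ℚ) else 0)
          = ((n:ℚ)-1)*(n:ℚ)/2 - ((((j*n)/m : ℤ):ℚ) * ((((j*n)/m : ℤ):ℚ)+1))/2 := by
      intro j hj
      simp only [mem_Ioc] at hj
      have hndvd : ¬ m ∣ j*n := by
        intro hd
        have : m ∣ j := cop.dvd_of_dvd_mul_right hd
        have := Int.le_of_dvd (by omega) this
        omega
      have hfil2 : (Ioc (0:ℤ) (n-1)).filter (fun k => j*n ≤ m*k) = Ioc ((j*n)/m) (n-1) := by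
        ext k
        simp only [mem_filter, mem_Ioc]
        constructor
        · rintro ⟨⟨h1,h2⟩,h3⟩
          have hne : j*n ≠ m*k := by
            intro he; exact hndvd ⟨k, he⟩
          have hlt : j*n < k*m := by rw [mul_comm k m]; omega
          exact ⟨(Int.ediv_lt_iff_lt_mul hm0).mpr hlt, h2⟩
        · rintro ⟨h1,h2⟩
          have hge : (0:ℤ) ≤ (j*n)/m := Int.ediv_nonneg (by nlinarith) (by omega)
          have h3 : j*n < k*m := (Int.ediv_lt_iff_lt_mul hm0).mp h1
          exact ⟨⟨by omega, h2⟩, by nlinarith⟩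
      rw [← Finset.sum_filter, hfil2]
      have hfle : (j*n)/m ≤ n-1 := by
        have : (j*n)/m < n := (Int.ediv_lt_iff_lt_mul hm0).mpr (by nlinarith)
        omega
      have hfge : (0:ℤ) ≤ (j*n)/m := Int.ediv_nonneg (by nlinarith) (by omega)
      have hsplit := sum_Ioc_split (fun k : ℤ => (k:ℚ)) hfge hfle
      rw [gauss1_s7 (n-1) (by omega), gauss1_s7 ((j*n)/m) hfge] at hsplit
      push_cast at hsplit ⊢
      linarith
    rw [Finset.sum_congr rfl hinner, Finset.sum_sub_distrib, Finset.sum_const, Int.card_Ioc,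
      nsmul_eq_mul]
    have hmm : (((m-1) - 0).toNat : ℚ) = (m:ℚ) - 1 := by
      have h5 : (((m-1) - 0).toNat : ℤ) = m - 1 := by omega
      exact_mod_cast h5
    rw [hmm]
    have htail : ∑ j ∈ Ioc (0:ℤ) (m-1), (((j*n)/m : ℤ):ℚ) * ((((j*n)/m : ℤ):ℚ)+1) / 2 = (F2 + F)/2 := by
      rw [hF2, hF, ← Finset.sum_add_distrib, ← Finset.sum_div]
      congr 1
      apply Finset.sum_congr rfl
      intro j _; ring
    rw [htail]
  -- eq3 : m^2 * F2
  have eq3 : (m:ℚ)^2 * F2 = ((n:ℚ)^2+1) * (((m:ℚ)-1)*(m:ℚ)*(2*(m:ℚ)-1)/6) - 2*(n:ℚ)*(T n m : ℚ) := by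
    have hterm : ∀ j ∈ Ioc (0:ℤ) (m-1),
        (m:ℚ)^2 * (((j*n)/m : ℤ):ℚ)^2
          = (n:ℚ)^2*(j:ℚ)^2 - 2*(n:ℚ)*((j:ℚ)*(((j*n) % m : ℤ):ℚ)) + (((j*n) % m : ℤ):ℚ)^2 := by
      intro j _
      have := Int.emod_def (j*n) m
      have hmf : (m:ℚ) * (((j*n)/m : ℤ):ℚ) = (j:ℚ)*(n:ℚ) - (((j*n) % m : ℤ):ℚ) := by
        push_cast [this]; ring
      have expand : ((m:ℚ) * (((j*n)/m : ℤ):ℚ))^2 = ((j:ℚ)*(n:ℚ) - (((j*n) % m : ℤ):ℚ))^2 := by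
        rw [hmf]
      nlinarith [expand]
    rw [hF2, Finset.mul_sum]
    rw [Finset.sum_congr rfl hterm]
    rw [Finset.sum_add_distrib, Finset.sum_sub_distrib, ← Finset.mul_sum, ← Finset.mul_sum]
    have hq1 : ∑ j ∈ Ioc (0:ℤ) (m-1), (j:ℚ)^2 = ((m:ℚ)-1)*(m:ℚ)*(2*(m:ℚ)-1)/6 := by
      have := gauss2_s7 (m-1) (by omega)
      push_cast at this ⊢
      rw [this]; ring
    have hq2 : ∑ j ∈ Ioc (0:ℤ) (m-1), (((j*n) % m : ℤ):ℚ)^2 = ((m:ℚ)-1)*(m:ℚ)*(2*(m:ℚ)-1)/6 := by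
      have hperm := sum_mul_emod n m hm cop.symm (fun x => (x:ℚ)^2)
      have hcomm : ∀ j ∈ Ioc (0:ℤ) (m-1), (((j*n) % m : ℤ):ℚ)^2 = (((n*j) % m : ℤ):ℚ)^2 := by
        intro j _; rw [mul_comm]
      rw [Finset.sum_congr rfl hcomm, hperm]
      exact hq1
    have hq3 : ∑ j ∈ Ioc (0:ℤ) (m-1), (j:ℚ)*(((j*n) % m : ℤ):ℚ) = (T n m : ℚ) := by
      have hcast : (T n m : ℚ) = ∑ j ∈ Ioc (0:ℤ) (m-1), ((j * ((n*j) % m) : ℤ):ℚ) := by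
        rw [T]; push_cast; rfl
      rw [hcast]
      apply Finset.sum_congr rfl
      intro j _
      rw [mul_comm j n]
      push_cast
      ring
    rw [hq1, hq2, hq3]
    ring
  -- eq4 : m * F
  have eq4 : (m:ℚ) * F = ((n:ℚ)-1) * (((m:ℚ)-1)*(m:ℚ)/2) := by
    have hterm : ∀ j ∈ Ioc (0:ℤ) (m-1),
        (m:ℚ) * (((j*n)/m : ℤ):ℚ) = (n:ℚ)*(j:ℚ) - (((j*n) % m : ℤ):ℚ) := by
      intro j _
      have := Int.emod_def (j*n) m
      push_cast [this]; ring
    rw [hF, Finset.mul_sum, Finset.sum_congr rfl hterm, Finset.sum_sub_distrib, ← Finset.mul_sum]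
    have hq1 : ∑ j ∈ Ioc (0:ℤ) (m-1), (j:ℚ) = ((m:ℚ)-1)*(m:ℚ)/2 := by
      have := gauss1_s7 (m-1) (by omega)
      push_cast at this ⊢
      rw [this]; ring
    have hq2 : ∑ j ∈ Ioc (0:ℤ) (m-1), (((j*n) % m : ℤ):ℚ) = ((m:ℚ)-1)*(m:ℚ)/2 := by
      have hperm := sum_mul_emod n m hm cop.symm (fun x => (x:ℚ))
      have hcomm : ∀ j ∈ Ioc (0:ℤ) (m-1), (((j*n) % m : ℤ):ℚ) = (((n*j) % m : ℤ):ℚ) := by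
        intro j _; rw [mul_comm]
      rw [Finset.sum_congr rfl hcomm, hperm]
      exact hq1
    rw [hq1, hq2]
    ring
  -- final assembly
  linear_combination (12*(m:ℚ)^2) * eq1 + (-12*(m:ℚ)^2*(n:ℚ)) * eq2 + (6*(n:ℚ)) * eq3 + (6*(m:ℚ)*(n:ℚ)) * eq4

lemma recip (m n : ℤ) (hm : 1 ≤ m) (hn : 1 ≤ n) (cop : IsCoprime m n) :
    12 * dedekindSum m n + 12 * dedekindSum n m
      = -3 + ((m:ℚ)/(n:ℚ) + (n:ℚ)/(m:ℚ) + 1/((m:ℚ)*(n:ℚ))) := by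
  have hm0 : (0:ℤ) < m := hm
  have hn0 : (0:ℤ) < n := hn
  have hmq : (m:ℚ) ≠ 0 := by exact_mod_cast hm0.ne'
  have hnq : (n:ℚ) ≠ 0 := by exact_mod_cast hn0.ne'
  rw [dedekind_formula m n hn cop, dedekind_formula n m hm cop.symm]
  have hT := T_identity m n hm hn cop
  field_simp
  linear_combination 4 * hT

lemma dedekind_periodic (m m' n : ℤ) (hn : 1 ≤ n) (hmm : n ∣ m - m') :
    dedekindSum m n = dedekindSum m' n := by
  have hn0 : (0:ℤ) < n := hn
  unfold dedekindSum
  apply Finset.sum_congr rfl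
  intro k _
  congr 1
  have h1 : (m:ℚ)*(k:ℚ)/(n:ℚ) = ((m*k : ℤ):ℚ)/(n:ℚ) := by push_cast; ring
  have h2 : (m':ℚ)*(k:ℚ)/(n:ℚ) = ((m'*k : ℤ):ℚ)/(n:ℚ) := by push_cast; ring
  have he : (m*k) % n = (m'*k) % n := by
    rw [Int.emod_eq_emod_iff_emod_sub_eq_zero]
    apply Int.emod_eq_zero_of_dvd
    obtain ⟨c, hc⟩ := hmm
    exact ⟨c*k, by linear_combination k*hc⟩
  have hdv : (n ∣ m*k) ↔ (n ∣ m'*k) := by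
    rw [Int.dvd_iff_emod_eq_zero, Int.dvd_iff_emod_eq_zero, he]
  rw [h1, h2, saw_div (m*k) n hn0, saw_div (m'*k) n hn0, he]
  by_cases hd : n ∣ m'*k
  · rw [if_pos hd, if_pos (hdv.mpr hd)]
  · rw [if_neg hd, if_neg (fun hx => hd (hdv.mp hx))]

lemma dedekind_one (d : ℤ) : dedekindSum d 1 = 0 := by
  unfold dedekindSum
  have : Finset.Icc (1:ℤ) 1 = {1} := by rfl
  rw [this, Finset.sum_singleton]
  have h1 : ((1:ℤ):ℚ)/((1:ℤ):ℚ) = 1 := by norm_num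
  have : saw (((1:ℤ):ℚ)/((1:ℤ):ℚ)) = 0 := by
    rw [h1]; simp [saw]
  push_cast at this ⊢
  rw [this, zero_mul]

lemma dedekind_cong : ∀ N : ℕ, ∀ c : ℤ, c.toNat ≤ N → 1 ≤ c → ∀ a d : ℤ, c ∣ a*d - 1 →
    ∃ z : ℤ, 12 * dedekindSum d c = ((a:ℚ) + (d:ℚ))/(c:ℚ) + (z:ℚ) := by
  intro N
  induction N with
  | zero => intro c hc hc1; omega
  | succ N ih =>
    intro c hcN hc1 a d hdvd
    by_cases hc2 : c = 1
    · subst hc2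
      refine ⟨-(a+d), ?_⟩
      rw [dedekind_one]
      push_cast
      ring
    · have hc2' : 2 ≤ c := by omega
      have hc0 : (0:ℤ) < c := hc1
      have hcq : (c:ℚ) ≠ 0 := by exact_mod_cast hc0.ne'
      set d' := d % c with hd'
      have hdr0 : 0 ≤ d' := Int.emod_nonneg d hc0.ne'
      have hdr1 : d' < c := Int.emod_lt_of_pos d hc0
      have hcdd : c ∣ d - d' := by
        exact ⟨d/c, by rw [hd', Int.emod_def]; ring⟩
      obtain ⟨k0, hk0⟩ := hdvd
      obtain ⟨cd, hcd⟩ := hcdd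
      have hdvd' : c ∣ a*d' - 1 := ⟨k0 - a*cd, by linear_combination hk0 - a*hcd⟩
      have hdne : d' ≠ 0 := by
        intro h0
        obtain ⟨w, hw⟩ := hdvd'
        rw [h0] at hw
        have hcd1 : c ∣ 1 := ⟨-w, by linear_combination -hw⟩
        have := Int.le_of_dvd one_pos hcd1
        omega
      have hd1 : 1 ≤ d' := by omega
      obtain ⟨k, hk⟩ := hdvd'
      have cop : IsCoprime d' c := ⟨a, -k, by linear_combination hk⟩
      obtain ⟨u, v, huv⟩ := cop.symm
      set e := u with he
      have hE1 : c*e - 1 = -v*d' := by rw [he]; linear_combination huv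
      obtain ⟨z1, hz1⟩ := ih d' (by omega) hd1 e c (by
        have : e*c - 1 = d' * (-v) := by linear_combination hE1
        exact ⟨-v, this⟩)
      have hper : dedekindSum d c = dedekindSum d' c := dedekind_periodic d d' c hc1 ⟨cd, hcd⟩
      have hrec := recip d' c hd1 hc1 cop
      have hdq : (d':ℚ) ≠ 0 := by
        intro h; apply hdne; exact_mod_cast h
      -- d' | e + k
      have hek : d' ∣ e + k := by
        have h1 : d' ∣ c * (e + k) := ⟨a - v, by linear_combination hE1 - hk⟩
        exact cop.dvd_of_dvd_mul_left h1
      obtain ⟨w, hw⟩ := hek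
      set t := d/c with ht
      have hdd : d = d' + c * t := by rw [ht, hd', Int.emod_def]; ring
      refine ⟨-z1 - 3 - w - t, ?_⟩
      -- rational facts
      have fact1 : (d':ℚ)/c + c/d' + 1/((d':ℚ)*c) - ((e:ℚ)+c)/d' = ((a:ℚ)+d')/c - ((e:ℚ)+k)/d' := by
        have hkq : (c:ℚ)*k = (a:ℚ)*d' - 1 := by exact_mod_cast hk.symm
        field_simp
        linear_combination hkq
      have fact2 : ((a:ℚ)+d)/c = ((a:ℚ)+d')/c + (t:ℚ) := by
        have : (d:ℚ) = (d':ℚ) + (c:ℚ)*(t:ℚ) := by exact_mod_cast hdd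
        rw [this]
        field_simp
        ring
      have fact3 : ((e:ℚ)+k)/d' = (w:ℚ) := by
        have : (e:ℚ) + k = (d':ℚ) * w := by exact_mod_cast hw
        rw [this]
        field_simp
      rw [hper]
      push_cast
      push_cast at hz1
      linarith [hrec, hz1, fact1, fact2, fact3]


theorem stmt7 (n q : ℤ) (hn : 1 ≤ n) (hq1 : 0 ≤ q) (hq2 : q ≤ n - 1)
    (hgcd : Int.gcd q n = 1) :
    ∃ m n' : ℤ, 1 ≤ n' ∧ 0 ≤ m ∧ m ≤ n' - 1 ∧ Int.gcd m n' = 1 ∧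
      ∃ z : ℤ, S m n' - (q : ℚ) / (n : ℚ) = z := by
  by_cases hn1 : n = 1
  · subst hn1
    have hq0 : q = 0 := by omega
    subst hq0
    refine ⟨0, 1, le_refl 1, le_refl 0, by norm_num, by norm_num, 0, ?_⟩
    rw [S, dedekind_one]
    norm_num
  · have hn2 : 2 ≤ n := by omega
    have hq0 : 1 ≤ q := by
      rcases Int.lt_or_le 0 q with h | h
      · omega
      · have : q = 0 := by omega
        subst this
        simp [Int.gcd] at hgcd
        omega
    have cop : IsCoprime q n := Int.isCoprime_iff_gcd_eq_one.mpr hgcd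
    obtain ⟨u, v, huv⟩ := cop
    set a := u % n with ha
    have ha0 : 0 ≤ a := Int.emod_nonneg u (by omega)
    have ha1 : a < n := Int.emod_lt_of_pos u (by omega)
    have hdvd : n ∣ a*q - 1 := by
      have h1 : u - a = n * (u/n) := by rw [ha, Int.emod_def]; ring
      exact ⟨-v - (u/n)*q, by linear_combination huv - q*h1⟩
    have hane : a ≠ 0 := by
      intro h0
      rw [h0] at hdvd
      obtain ⟨w, hw⟩ := hdvd
      have h2 : n ∣ 1 := ⟨-w, by linear_combination -hw⟩
      have := Int.le_of_dvd one_pos h2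
      omega
    obtain ⟨s, hs⟩ := hdvd
    have hA : 1 ≤ a := by omega
    have hsq : 0 ≤ a^2 := sq_nonneg a
    have hc1 : 1 ≤ (a^2+1)*n := by nlinarith
    have hmul1 : (a^2+1)*1 ≤ (a^2+1)*q := by
      apply mul_le_mul_of_nonneg_left hq0 (by positivity)
    have hmul2 : (a^2+1)*q ≤ (a^2+1)*(n-1) := by
      apply mul_le_mul_of_nonneg_left (by omega) (by positivity)
    have haa : 0 ≤ a*(a-1) := mul_nonneg (by omega) (by omega)
    have hd0 : 0 ≤ (a^2+1)*q - a := by nlinarith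
    have hd1 : (a^2+1)*q - a ≤ (a^2+1)*n - 1 - 1 := by nlinarith
    have hcdvd : (a^2+1)*n ∣ a*((a^2+1)*q - a) - 1 := ⟨s, by linear_combination (a^2+1)*hs⟩
    obtain ⟨s2, hs2⟩ := hcdvd
    have hgcd2 : Int.gcd ((a^2+1)*q - a) ((a^2+1)*n) = 1 := by
      apply Int.isCoprime_iff_gcd_eq_one.mp
      exact ⟨a, -s2, by linear_combination hs2⟩
    obtain ⟨z, hz⟩ := dedekind_cong ((a^2+1)*n).toNat ((a^2+1)*n) le_rfl hc1 a
      ((a^2+1)*q - a) ⟨s2, hs2⟩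
    refine ⟨(a^2+1)*q - a, (a^2+1)*n, hc1, hd0, by omega, hgcd2, z, ?_⟩
    rw [S, hz]
    have ha2 : ((a:ℚ)^2+1) ≠ 0 := by positivity
    have hnq : (n:ℚ) ≠ 0 := by
      have : (0:ℤ) < n := by omega
      exact_mod_cast this.ne'
    have : ((a:ℚ) + (((a^2+1)*q - a : ℤ):ℚ))/(((a^2+1)*n : ℤ):ℚ) = (q:ℚ)/(n:ℚ) := by
      push_cast
      field_simp
      ring
    rw [this]
    ring
end

section
/- The set {12·s(m,n) : n ≥ 1, 1 ≤ m ≤ n, gcd(m,n) = 1} of (scaled) Dedekind sum values has fractional parts that include q/n for every pair of coprime integers (q, n) with 0 ≤ q < n; equivalently, the map from Dedekind sums to their fractional parts is surjective onto ℚ ∩ [0,1). -/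
lemma floor_int_div {a b : ℤ} (hb : 0 < b) : ⌊(a:ℚ)/(b:ℚ)⌋ = a / b := by
  have h : ((b.toNat : ℕ) : ℤ) = b := Int.toNat_of_nonneg hb.le
  rw [← h, Int.cast_natCast, Rat.floor_intCast_div_natCast]

lemma den_one_iff {a b : ℤ} (hb : 0 < b) : ((a:ℚ)/(b:ℚ)).den = 1 ↔ b ∣ a := by
  have hb0 : (b:ℚ) ≠ 0 := by exact_mod_cast hb.ne'
  constructor
  · intro hden
    have h2 := (Rat.den_eq_one_iff _).mp hden
    have h3 : (((a:ℚ)/b).num : ℚ) * b = a := (eq_div_iff hb0).mp h2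
    have h4 : (a:ℚ) = (b:ℚ) * (((a:ℚ)/b).num : ℚ) := by linear_combination -h3
    exact ⟨((a:ℚ)/b).num, by exact_mod_cast h4⟩
  · rintro ⟨e, rfl⟩
    rw [Int.cast_mul, mul_div_cancel_left₀ _ hb0]
    exact Rat.den_intCast e

lemma saw_eq {a b : ℤ} (hb : 0 < b) (h : ¬ b ∣ a) :
    saw ((a:ℚ)/b) = (a:ℚ)/b - ((a / b : ℤ) : ℚ) - 1/2 := by
  rw [saw, if_neg (fun hd => h ((den_one_iff hb).mp hd)), floor_int_div hb]

lemma saw_intCast (z : ℤ) : saw ((z:ℤ):ℚ) = 0 := by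
  rw [saw, if_pos (Rat.den_intCast z)]

lemma Ico_succ_top {N : ℤ} (hN : 1 ≤ N) :
    Finset.Ico (1:ℤ) (N+1) = insert N (Finset.Ico (1:ℤ) N) := by
  ext x
  simp only [Finset.mem_Ico, Finset.mem_insert]
  omega

lemma sum_id_int {N : ℤ} (hN : 1 ≤ N) :
    2 * ∑ k ∈ Finset.Ico (1:ℤ) N, k = N * (N-1) := by
  refine Int.le_induction (motive := fun M _ => 2 * ∑ k ∈ Finset.Ico (1:ℤ) M, k = M * (M-1)) ?_ ?_ N hN
  · simp
  · intro n hn ih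
    rw [Ico_succ_top hn, Finset.sum_insert (by simp)]
    linear_combination ih

lemma sum_sq_int {N : ℤ} (hN : 1 ≤ N) :
    6 * ∑ k ∈ Finset.Ico (1:ℤ) N, k^2 = N * (N-1) * (2*N-1) := by
  refine Int.le_induction (motive := fun M _ => 6 * ∑ k ∈ Finset.Ico (1:ℤ) M, k^2 = M * (M-1) * (2*M-1)) ?_ ?_ N hN
  · simp
  · intro n hn ih
    rw [Ico_succ_top hn, Finset.sum_insert (by simp)]
    linear_combination ih

lemma sum_one_int {N : ℤ} (hN : 1 ≤ N) :
    ∑ k ∈ Finset.Ico (1:ℤ) N, (1:ℤ) = N - 1 := by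
  refine Int.le_induction (motive := fun M _ => ∑ k ∈ Finset.Ico (1:ℤ) M, (1:ℤ) = M - 1) ?_ ?_ N hN
  · simp
  · intro n hn ih
    rw [Ico_succ_top hn, Finset.sum_insert (by simp)]
    linear_combination ih

lemma emod_cancel {N c a b k : ℤ} (hN : 2 ≤ N) (hab : a * b = 1 + N * c)
    (h1 : 1 ≤ k) (h2 : k < N) : b * (a * k % N) % N = k := by
  have e1 : b * (a * k % N) % N = b * (a * k) % N := by
    rw [Int.mul_emod, Int.emod_emod_of_dvd _ dvd_rfl, ← Int.mul_emod]
  rw [e1, show b * (a * k) = k + N * (c * k) by linear_combination k * hab,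
    Int.add_mul_emod_self_left]
  exact Int.emod_eq_of_lt (by omega) h2

lemma emod_mem {N a k : ℤ} (hN : 2 ≤ N) (hcop : IsCoprime N a)
    (h1 : 1 ≤ k) (h2 : k < N) : a * k % N ∈ Finset.Ico (1:ℤ) N := by
  have hnn : 0 ≤ a * k % N := Int.emod_nonneg _ (by omega)
  have hlt : a * k % N < N := Int.emod_lt_of_pos _ (by omega)
  have hne : a * k % N ≠ 0 := by
    intro h0
    have hdvd : N ∣ a * k := Int.dvd_of_emod_eq_zero h0
    have : N ∣ k := hcop.dvd_of_dvd_mul_left hdvd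
    have := Int.le_of_dvd (by omega) this
    omega
  simp only [Finset.mem_Ico]
  omega

lemma perm_sum_sq {N m m' c : ℤ} (hN : 2 ≤ N) (h : m * m' = 1 + N * c) :
    ∑ k ∈ Finset.Ico (1:ℤ) N, (m * k % N)^2 = ∑ k ∈ Finset.Ico (1:ℤ) N, k^2 := by
  have hcop : IsCoprime N m := ⟨-c, m', by linarith⟩
  have hcop' : IsCoprime N m' := ⟨-c, m, by linarith⟩
  have h' : m' * m = 1 + N * c := by linarith
  refine Finset.sum_nbij' (i := fun k => m * k % N) (j := fun k => m' * k % N)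
    ?_ ?_ ?_ ?_ ?_
  · intro k hk
    simp only [Finset.mem_Ico] at hk
    exact emod_mem hN hcop hk.1 hk.2
  · intro k hk
    simp only [Finset.mem_Ico] at hk
    exact emod_mem hN hcop' hk.1 hk.2
  · intro k hk
    simp only [Finset.mem_Ico] at hk
    exact emod_cancel hN h hk.1 hk.2
  · intro k hk
    simp only [Finset.mem_Ico] at hk
    exact emod_cancel hN h' hk.1 hk.2
  · intro k _; rfl

lemma key {N m m' c : ℤ} (hN : 2 ≤ N) (h : m * m' = 1 + N * c) :
    ∃ t : ℤ, 12 * (N:ℚ) * dedekindSum m N = (m:ℚ) + m' + N * t := by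
  have h0N : (0:ℤ) < N := by omega
  have hN0 : N ≠ 0 := by omega
  have hNQ : (N:ℚ) ≠ 0 := by exact_mod_cast hN0
  have hcop : IsCoprime N m := ⟨-c, m', by linarith⟩
  set s : Finset ℤ := Finset.Ico (1:ℤ) N with hs
  -- Step A : restrict to Ico
  have hA : dedekindSum m N = ∑ k ∈ s, saw ((k:ℚ)/N) * saw ((m:ℚ) * k / N) := by
    rw [dedekindSum, ← Finset.Ico_insert_right (by omega : (1:ℤ) ≤ N),
      Finset.sum_insert (by simp)]
    have e1 : (N:ℚ)/(N:ℚ) = ((1:ℤ):ℚ) := by push_cast; field_simp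
    have e2 : (m:ℚ) * N / N = ((m:ℤ):ℚ) := by field_simp
    rw [e1, e2, saw_intCast, saw_intCast, mul_zero, zero_add]
  -- Step B : integer expression
  have hB : 12 * (N:ℚ)^2 * dedekindSum m N =
      ((∑ k ∈ s, (12*k*(m*k % N) - 6*N*k - 6*N*(m*k % N) + 3*N^2) : ℤ) : ℚ) := by
    rw [hA, Finset.mul_sum, Int.cast_sum]
    refine Finset.sum_congr rfl ?_
    intro k hk
    simp only [hs, Finset.mem_Ico] at hk
    have hndk : ¬ N ∣ k := by
      intro hd
      have := Int.le_of_dvd (by omega) hd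
      omega
    have hndmk : ¬ N ∣ m * k := fun hd => hndk (hcop.dvd_of_dvd_mul_left hd)
    have s1 : saw ((k:ℚ)/N) = (k:ℚ)/N - ((k / N : ℤ) : ℚ) - 1/2 := saw_eq h0N hndk
    have s2 : saw ((m:ℚ) * k / N) = ((m*k:ℤ):ℚ)/N - ((m*k / N : ℤ) : ℚ) - 1/2 := by
      have := saw_eq (a := m*k) h0N hndmk
      rw [show ((m*k:ℤ):ℚ) = (m:ℚ) * k by push_cast; ring] at this
      rw [this]
      push_cast
      ring
    have hkdiv : k / N = 0 := Int.ediv_eq_zero_of_lt (by omega) hk.2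
    have hrr : ((m*k % N : ℤ) : ℚ) = (m:ℚ)*k - (N:ℚ) * ((m*k / N : ℤ) : ℚ) := by
      rw [Int.emod_def]; push_cast; ring
    rw [s1, s2, hkdiv]
    push_cast
    rw [hrr]
    field_simp
    ring
  -- Integer-side computations
  set A : ℤ := ∑ k ∈ s, k * (m*k / N) with hA'
  set F : ℤ := ∑ k ∈ s, (m*k / N)^2 with hF'
  set Sf : ℤ := ∑ k ∈ s, (m*k / N) with hSf'
  set K1 : ℤ := ∑ k ∈ s, k with hK1'
  set K2 : ℤ := ∑ k ∈ s, k^2 with hK2'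
  have hK1 : 2 * K1 = N * (N-1) := sum_id_int (by omega)
  have hK2 : 6 * K2 = N * (N-1) * (2*N-1) := sum_sq_int (by omega)
  have hC : ∑ k ∈ s, (1:ℤ) = N - 1 := sum_one_int (by omega)
  -- E : big sum in terms of A, K1, K2, Sf
  have hE : ∑ k ∈ s, (12*k*(m*k % N) - 6*N*k - 6*N*(m*k % N) + 3*N^2)
      = 12*m*K2 - 12*N*A - 6*N*K1 - 6*m*N*K1 + 6*N^2*Sf + 3*N^2*(N-1) := by
    have h1 : ∀ k ∈ s, 12*k*(m*k % N) - 6*N*k - 6*N*(m*k % N) + 3*N^2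
        = (12*m)*k^2 - (12*N)*(k*(m*k/N)) - (6*N)*k - (6*m*N)*k
          + (6*N^2)*(m*k/N) + (3*N^2)*1 := by
      intro k _
      rw [Int.emod_def]
      ring
    rw [Finset.sum_congr rfl h1, Finset.sum_add_distrib, Finset.sum_add_distrib,
      Finset.sum_sub_distrib, Finset.sum_sub_distrib, Finset.sum_sub_distrib,
      ← Finset.mul_sum, ← Finset.mul_sum, ← Finset.mul_sum, ← Finset.mul_sum,
      ← Finset.mul_sum, ← Finset.mul_sum, hC, ← hA', ← hSf', ← hK1', ← hK2']
  -- E2 : permutation identity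
  have hperm : ∑ k ∈ s, (m * k % N)^2 = K2 := perm_sum_sq hN h
  have hE2 : K2 = m^2*K2 - 2*m*N*A + N^2*F := by
    have h1 : ∀ k ∈ s, (m * k % N)^2
        = (m^2)*k^2 - (2*m*N)*(k*(m*k/N)) + (N^2)*(m*k/N)^2 := by
      intro k _
      rw [Int.emod_def]
      ring
    conv_lhs => rw [← hperm]
    rw [Finset.sum_congr rfl h1, Finset.sum_add_distrib, Finset.sum_sub_distrib,
      ← Finset.mul_sum, ← Finset.mul_sum, ← Finset.mul_sum, ← hA', ← hF', ← hK2']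
  -- E3
  have hE3 : (m^2-1)*(N-1)*(2*N-1) = 12*m*A - 6*N*F := by
    have hNint : (N:ℤ) ≠ 0 := hN0
    apply mul_left_cancel₀ hNint
    linear_combination (-6 : ℤ) * hE2 - (m^2-1) * hK2
  -- claim : N ∣ m - m' - 12 A
  set u : ℤ := (m^2-1)*(3-2*N) - c - 6*F with hu'
  have step1 : m * (m - m' - 12*A) = N * u := by
    rw [hu']
    linear_combination hE3 - h
  set w : ℤ := m' * u - c * (m - m' - 12*A) with hw'
  have claim : m - m' - 12*A = N * w := by
    rw [hw']
    linear_combination m' * step1 - (m - m' - 12*A) * h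
  -- final integer identity
  refine ⟨m*N - 3*m + 6*Sf + w, ?_⟩
  have hbig : ∑ k ∈ s, (12*k*(m*k % N) - 6*N*k - 6*N*(m*k % N) + 3*N^2)
      = N*(m+m') + N^2*(m*N - 3*m + 6*Sf + w) := by
    rw [hE]
    linear_combination (2*m) * hK2 - (3*N*(1+m)) * hK1 + N * claim
  rw [hbig] at hB
  apply mul_left_cancel₀ hNQ
  push_cast at hB ⊢
  linear_combination hB

theorem stmt18 (q n : ℤ) (hq : 0 ≤ q) (hqn : q < n) (hgcd : Int.gcd q n = 1) :
    ∃ m n' : ℤ, 1 ≤ n' ∧ 1 ≤ m ∧ m ≤ n' ∧ Int.gcd m n' = 1 ∧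
      Int.fract (12 * dedekindSum m n') = (q : ℚ) / (n : ℚ) := by
  have hn1 : 1 ≤ n := by omega
  by_cases hn : n = 1
  · -- q = 0
    have hq0 : q = 0 := by omega
    refine ⟨1, 1, le_refl _, le_refl _, le_refl _, by decide, ?_⟩
    subst hq0 hn
    have : dedekindSum 1 1 = 0 := by
      rw [dedekindSum]
      simp [saw]
    rw [this]
    simp
  · have hn2 : 2 ≤ n := by omega
    have hco : IsCoprime q n := Int.isCoprime_iff_gcd_eq_one.mpr hgcd
    obtain ⟨u, v, huv⟩ := hco
    set m : ℤ := u % n with hm'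
    have hm0 : 0 ≤ m := Int.emod_nonneg u (by omega)
    have hmlt : m < n := Int.emod_lt_of_pos u (by omega)
    set d : ℤ := -v - q*(u/n) with hd'
    have hqm : q * m = 1 + n * d := by
      rw [hm', hd', Int.emod_def]
      linear_combination huv
    have hmne : m ≠ 0 := by
      intro h0
      rw [h0, mul_zero] at hqm
      have h1 : n * (-d) = 1 := by linarith
      have := Int.le_of_dvd one_pos ⟨-d, h1.symm⟩
      omega
    have hm1 : 1 ≤ m := by omega
    set c : ℤ := m^2 + 1 with hc'
    have hc1 : 1 ≤ c := by nlinarith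
    have hmm' : m * (q*c - m) = 1 + (n*c) * d := by
      rw [hc']
      linear_combination (m^2+1) * hqm
    have hN2 : 2 ≤ n * c := by nlinarith
    obtain ⟨t, ht⟩ := key hN2 hmm'
    have hn0 : (n:ℚ) ≠ 0 := by
      intro h0
      exact (by omega : n ≠ 0) (by exact_mod_cast h0)
    have hc0 : (c:ℚ) ≠ 0 := by
      intro h0
      exact (by omega : c ≠ 0) (by exact_mod_cast h0)
    refine ⟨m, n*c, by nlinarith, hm1, by nlinarith, ?_, ?_⟩
    · exact Int.isCoprime_iff_gcd_eq_one.mp ⟨q*c - m, -d, by linear_combination hmm'⟩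
    · have h12 : 12 * dedekindSum m (n*c) = (q:ℚ)/n + t := by
        apply mul_left_cancel₀ (mul_ne_zero hn0 hc0)
        push_cast at ht
        field_simp
        exact mul_left_cancel₀ hc0 (by linear_combination ht)
      rw [h12, Int.fract_add_intCast, Int.fract_eq_self.mpr ⟨?_, ?_⟩]
      · exact div_nonneg (by exact_mod_cast hq) (by positivity)
      · rw [div_lt_one (by exact_mod_cast (by omega : (0:ℤ) < n))]
        exact_mod_cast hqn
end
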